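/- Let ρ : [0,b] → (0,1) be differentiable and satisfy the ODE ρ'(y)/ρ(y) + ρ'(y)/(1−ρ(y)) = K(1−ρ(y)) for a constant K < 0, with ρ(0) = ρ₀ ∈ (0,1). Then for all y ∈ [0,b], K·y = ln[ (ρ(y)/(1−ρ(y)))·((1−ρ₀)/ρ₀) ] + 1/(1−ρ(y)) − 1/(1−ρ₀). -/

import Mathlib

theorem choke_position_probability (b K ρ₀ : ℝ) (hb : 0 < b) (hK : K < 0)
    (hρ₀ : ρ₀ ∈ Set.Ioo (0:ℝ) 1)
    (ρ ρ' : ℝ → ℝ) (h0 : ρ 0 = ρ₀)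
    (hmem : ∀ y ∈ Set.Icc (0:ℝ) b, ρ y ∈ Set.Ioo (0:ℝ) 1)
    (hderiv : ∀ y ∈ Set.Icc (0:ℝ) b, HasDerivAt ρ (ρ' y) y)
    (hode : ∀ y ∈ Set.Icc (0:ℝ) b,
      ρ' y / ρ y + ρ' y / (1 - ρ y) = K * (1 - ρ y)) :
    ∀ y ∈ Set.Icc (0:ℝ) b,
      K * y = Real.log ((ρ y / (1 - ρ y)) * ((1 - ρ₀)/ρ₀))
        + 1/(1 - ρ y) - 1/(1 - ρ₀) := by
  set G : ℝ → ℝ := fun y => Real.log (ρ y) - Real.log (1 - ρ y) + (1 - ρ y)⁻¹ - K * y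
    with hG
  have hGd : ∀ y ∈ Set.Icc (0:ℝ) b, HasDerivAt G 0 y := by
    intro y hy
    obtain ⟨h1, h2⟩ := hmem y hy
    have hne : ρ y ≠ 0 := ne_of_gt h1
    have hne1 : 1 - ρ y ≠ 0 := by linarith
    have hd := hderiv y hy
    have hd1 : HasDerivAt (fun y => Real.log (ρ y)) (ρ' y / ρ y) y := hd.log hne
    have hd2 : HasDerivAt (fun y => (1 : ℝ) - ρ y) (-(ρ' y)) y := by
      simpa using (hasDerivAt_const y (1:ℝ)).fun_sub hd
    have hd3 : HasDerivAt (fun y => Real.log (1 - ρ y)) (-(ρ' y) / (1 - ρ y)) y :=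
      hd2.log hne1
    have hd4 : HasDerivAt (fun y => ((1 : ℝ) - ρ y)⁻¹)
        (-(-(ρ' y)) / (1 - ρ y)^2) y := by
      simpa [div_eq_mul_inv] using hd2.fun_inv hne1
    have hd5 : HasDerivAt (fun y => K * y) K y := by
      simpa using (hasDerivAt_id y).const_mul K
    have := ((hd1.fun_sub hd3).fun_add hd4).fun_sub hd5
    have hρ' : ρ' y = K * ρ y * (1 - ρ y)^2 := by
      have h := hode y hy
      field_simp at h
      nlinarith [h]
    convert (show HasDerivAt G _ y from this) using 1
    rw [hρ']
    field_simp
    ring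
  have hGc : ∀ y ∈ Set.Icc (0:ℝ) b, G y = G 0 := by
    have hcont : ContinuousOn G (Set.Icc 0 b) := fun y hy =>
      (hGd y hy).continuousAt.continuousWithinAt
    have hder : ∀ y ∈ Set.Ico (0:ℝ) b, HasDerivWithinAt G 0 (Set.Ici y) y := fun y hy =>
      (hGd y (Set.Ico_subset_Icc_self hy)).hasDerivWithinAt
    exact fun y hy => constant_of_has_deriv_right_zero hcont hder y hy
  intro y hy
  obtain ⟨h1, h2⟩ := hmem y hy
  have h0m : (0:ℝ) ∈ Set.Icc (0:ℝ) b := Set.mem_Icc.mpr ⟨le_refl _, le_of_lt hb⟩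
  have key := hGc y hy
  rw [hG] at key
  simp only [h0, mul_zero, sub_zero] at key
  obtain ⟨g1, g2⟩ := hρ₀
  have hne : ρ y ≠ 0 := ne_of_gt h1
  have hne1 : (1:ℝ) - ρ y ≠ 0 := by linarith
  have gne : ρ₀ ≠ 0 := ne_of_gt g1
  have gne1 : (1:ℝ) - ρ₀ ≠ 0 := by linarith
  have hlog : Real.log ((ρ y / (1 - ρ y)) * ((1 - ρ₀)/ρ₀))
      = Real.log (ρ y) - Real.log (1 - ρ y) + (Real.log (1 - ρ₀) - Real.log ρ₀) := by
    rw [Real.log_mul (by positivity : ρ y / (1 - ρ y) ≠ 0)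
        (by positivity : (1 - ρ₀)/ρ₀ ≠ 0),
      Real.log_div hne hne1, Real.log_div gne1 gne]
  rw [hlog]
  have := key
  simp only [one_div]
  linarith [key]
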